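/- Let H₀ and V be self-adjoint operators on a finite-dimensional complex Hilbert space. Define η₁(λ) = Tr(E_{H₀}((−∞,λ))) − Tr(E_{H₀+V}((−∞,λ))), i.e., the number of eigenvalues of H₀ below λ minus the number of eigenvalues of H₀+V below λ, counting multiplicities. Then η₁ ∈ L¹(ℝ) and Tr(f(H₀+V) − f(H₀)) = ∫_ℝ f'(λ) η₁(λ) dλ for every continuously differentiable function f : ℝ → ℂ. -/

import Mathlib

open scoped InnerProductSpace
open MeasureTheory Set

noncomputable section

variable {H : Type*} [NormedAddCommGroup H] [InnerProductSpace ℂ H] [FiniteDimensional ℂ H]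

/-- The trace of an operator on a finite-dimensional Hilbert space. -/
def Trace (A : H →L[ℂ] H) : ℂ := LinearMap.trace ℂ H (A : H →ₗ[ℂ] H)

/-- `f(A)` for a self-adjoint operator `A` and `f : ℝ → ℂ`, via the continuous functional
calculus (the spectrum of `A` is real, so only the values of `f` on `ℝ` matter). -/
def fcSA (f : ℝ → ℂ) (A : H →L[ℂ] H) : H →L[ℂ] H := cfc (fun z : ℂ => f z.re) A

/-- `Tr E_A((-∞,λ))`: the number of eigenvalues of `A` (counting multiplicity) that are
strictly less than `λ`, i.e. the dimension of the span of the corresponding eigenspaces. -/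
def countBelow (A : H →L[ℂ] H) (l : ℝ) : ℕ :=
  Module.finrank ℂ
    ↥(⨆ (μ : ℝ) (_ : μ < l), Module.End.eigenspace (A : H →ₗ[ℂ] H) (μ : ℂ))

section Aux

variable {T : H →ₗ[ℂ] H} (hT : T.IsSymmetric) {n : ℕ} (hn : Module.finrank ℂ H = n)

lemma eig_repr_zero {c : ℂ} {v : H} (hv : v ∈ Module.End.eigenspace T c)
    (i : Fin n) (hi : (hT.eigenvalues hn i : ℂ) ≠ c) :
    (hT.eigenvectorBasis hn).repr v i = 0 := by
  have h1 := hT.eigenvectorBasis_apply_self_apply hn v i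
  have h2 : T v = c • v := Module.End.mem_eigenspace_iff.mp hv
  rw [h2] at h1
  have h3 : c * (hT.eigenvectorBasis hn).repr v i
      = (hT.eigenvalues hn i : ℂ) * (hT.eigenvectorBasis hn).repr v i := by
    simpa using h1
  have h4 : ((hT.eigenvalues hn i : ℂ) - c) * (hT.eigenvectorBasis hn).repr v i = 0 := by
    linear_combination -h3
  rcases mul_eq_zero.mp h4 with h | h
  · exact absurd (sub_eq_zero.mp h) hi
  · exact h

lemma spectrum_exists_eig {c : ℂ} (hc : c ∈ spectrum ℂ T) :
    ∃ i : Fin n, (hT.eigenvalues hn i : ℂ) = c := by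
  have hev : Module.End.HasEigenvalue T c :=
    Module.End.hasEigenvalue_iff_mem_spectrum.mpr hc
  obtain ⟨v, hv⟩ := hev.exists_hasEigenvector
  by_contra hcon
  push_neg at hcon
  apply hv.2
  have : ∀ i, (hT.eigenvectorBasis hn).repr v i = 0 := fun i =>
    eig_repr_zero hT hn hv.1 i (hcon i)
  have hr : (hT.eigenvectorBasis hn).repr v = 0 := by
    ext i; exact this i
  simpa using congrArg (hT.eigenvectorBasis hn).repr.symm hr

end Aux

section AuxCLM

variable (A : H →L[ℂ] H)

lemma spectrum_coe_eq : spectrum ℂ (A : H →ₗ[ℂ] H) = spectrum ℂ A := by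
  have := AlgEquiv.spectrum_eq (Module.End.toContinuousLinearMap H (𝕜 := ℂ)) (A : H →ₗ[ℂ] H)
  have h2 : Module.End.toContinuousLinearMap H (𝕜 := ℂ) (A : H →ₗ[ℂ] H) = A := by
    apply ContinuousLinearMap.coe_injective
    rfl
  rw [h2] at this
  exact this.symm

variable {A} (hA : IsSelfAdjoint A) {n : ℕ} (hn : Module.finrank ℂ H = n)

lemma cfc_apply_eigenvectorBasis {g : ℂ → ℂ} (hg : Continuous g) (i : Fin n) :
    cfc g A (hA.isSymmetric.eigenvectorBasis hn i)
      = g (hA.isSymmetric.eigenvalues hn i) • hA.isSymmetric.eigenvectorBasis hn i := by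
  set hT := hA.isSymmetric
  set b := hT.eigenvectorBasis hn
  set μ := hT.eigenvalues hn
  set s : Finset ℂ := Finset.image (fun j => (μ j : ℂ)) Finset.univ with hs
  set p : Polynomial ℂ := Lagrange.interpolate s id g with hp
  have hinj : Set.InjOn (id : ℂ → ℂ) s := fun x _ y _ h => h
  have hnode : ∀ c ∈ s, p.eval c = g c := by
    intro c hcs
    have := Lagrange.eval_interpolate_at_node g hinj hcs
    exact this
  have hsub : spectrum ℂ A ⊆ (s : Set ℂ) := by
    intro c hc
    rw [← spectrum_coe_eq A] at hc
    obtain ⟨i, hi⟩ := spectrum_exists_eig hT hn hc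
    simp only [hs, Finset.coe_image, Finset.coe_univ, Set.image_univ]
    exact ⟨i, hi⟩
  have hcongr : cfc g A = cfc (fun x => p.eval x) A := by
    apply cfc_congr
    intro x hx
    exact (hnode x (hsub hx)).symm
  have hpoly : cfc (fun x => p.eval x) A = Polynomial.aeval A p :=
    cfc_polynomial p A
  have hcoe : ((Polynomial.aeval A p : H →L[ℂ] H) : H →ₗ[ℂ] H)
      = Polynomial.aeval (A : H →ₗ[ℂ] H) p := by
    have := Polynomial.aeval_algHom_apply
      ((Module.End.toContinuousLinearMap H (𝕜 := ℂ)).symm : (H →L[ℂ] H) →ₐ[ℂ] (H →ₗ[ℂ] H)) A p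
    exact this.symm
  have hev : Module.End.HasEigenvector (A : H →ₗ[ℂ] H) ((μ i : ℂ)) (b i) :=
    hT.hasEigenvector_eigenvectorBasis hn i
  have happ : (Polynomial.aeval (A : H →ₗ[ℂ] H) p) (b i) = p.eval ((μ i : ℂ)) • b i :=
    Module.End.aeval_apply_of_hasEigenvector hev
  have hmem : (μ i : ℂ) ∈ s := Finset.mem_image_of_mem _ (Finset.mem_univ i)
  calc cfc g A (b i) = (Polynomial.aeval A p) (b i) := by rw [hcongr, hpoly]
    _ = (Polynomial.aeval (A : H →ₗ[ℂ] H) p) (b i) := by rw [← hcoe]; rfl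
    _ = p.eval ((μ i : ℂ)) • b i := happ
    _ = g (μ i) • b i := by rw [hnode _ hmem]

end AuxCLM

lemma trace_eq_sum_inner {n : ℕ} (b : OrthonormalBasis (Fin n) ℂ H) (B : H →L[ℂ] H) :
    Trace B = ∑ i, ⟪b i, B (b i)⟫_ℂ := by
  rw [Trace, LinearMap.trace_eq_matrix_trace ℂ b.toBasis, Matrix.trace]
  apply Finset.sum_congr rfl
  intro i _
  rw [Matrix.diag_apply, LinearMap.toMatrix_apply]
  simp [b.repr_apply_apply]

lemma trace_fcSA {A : H →L[ℂ] H} (hA : IsSelfAdjoint A) {n : ℕ}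
    (hn : Module.finrank ℂ H = n) {f : ℝ → ℂ} (hf : Continuous f) :
    Trace (fcSA f A) = ∑ i, f (hA.isSymmetric.eigenvalues hn i) := by
  set b := hA.isSymmetric.eigenvectorBasis hn
  rw [trace_eq_sum_inner b]
  apply Finset.sum_congr rfl
  intro i _
  have hg : Continuous fun z : ℂ => f z.re := hf.comp Complex.continuous_re
  rw [fcSA, cfc_apply_eigenvectorBasis hA hn hg i, inner_smul_right]
  have hb : ⟪b i, b i⟫_ℂ = 1 := by
    have := (orthonormal_iff_ite.mp b.orthonormal) i i
    simpa using this
  rw [hb, mul_one]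
  simp

lemma countBelow_eq {A : H →L[ℂ] H} (hA : IsSelfAdjoint A) {n : ℕ}
    (hn : Module.finrank ℂ H = n) (l : ℝ) :
    countBelow A l
      = (Finset.univ.filter fun i => hA.isSymmetric.eigenvalues hn i < l).card := by
  set hT := hA.isSymmetric
  set b := hT.eigenvectorBasis hn
  set μ := hT.eigenvalues hn
  have hspan : (⨆ (c : ℝ) (_ : c < l), Module.End.eigenspace (A : H →ₗ[ℂ] H) (c : ℂ))
      = Submodule.span ℂ (b '' {i | μ i < l}) := by
    apply le_antisymm
    · apply iSup₂_le
      intro c hc v hv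
      rw [← b.sum_repr v]
      apply Submodule.sum_mem
      intro i _
      by_cases hμ : (μ i : ℂ) = (c : ℂ)
      · have hil : μ i < l := by
          have : μ i = c := by exact_mod_cast hμ
          rw [this]; exact hc
        exact Submodule.smul_mem _ _ (Submodule.subset_span ⟨i, hil, rfl⟩)
      · rw [eig_repr_zero hT hn hv i hμ, zero_smul]
        exact Submodule.zero_mem _
    · rw [Submodule.span_le]
      rintro x ⟨i, hi, rfl⟩
      refine Submodule.mem_iSup_of_mem (μ i) (Submodule.mem_iSup_of_mem hi ?_)
      exact (hT.hasEigenvector_eigenvectorBasis hn i).1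
  rw [countBelow, hspan, Set.image_eq_range]
  have hli : LinearIndependent ℂ (fun j : {i | μ i < l} => b (j : Fin n)) :=
    b.orthonormal.linearIndependent.comp _ Subtype.val_injective
  rw [finrank_span_eq_card hli]
  simp [Fintype.card_subtype]

lemma indicator_helper (f : ℝ → ℂ) (a c l : ℝ) :
    deriv f l * (((Ioc a c).indicator (fun _ => (1:ℝ)) l : ℝ) : ℂ)
      = (Ioc a c).indicator (deriv f) l := by
  by_cases h : l ∈ Ioc a c <;> simp [h]

/-- **Lifshits–Krein trace formula in finite dimensions.**  For self-adjoint operators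
`H₀, V` on a finite-dimensional complex Hilbert space, the spectral shift function
`η₁(λ) = Tr E_{H₀}((-∞,λ)) - Tr E_{H₀+V}((-∞,λ))` is integrable on `ℝ` and
`Tr(f(H₀+V) - f(H₀)) = ∫_ℝ f'(λ) η₁(λ) dλ` for every `C¹` function `f : ℝ → ℂ`. -/
theorem finite_dimensional_spectral_shift
    (H₀ V : H →L[ℂ] H) (hH₀ : IsSelfAdjoint H₀) (hV : IsSelfAdjoint V) :
    Integrable (fun l : ℝ => (countBelow H₀ l : ℝ) - (countBelow (H₀ + V) l : ℝ)) ∧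
    ∀ f : ℝ → ℂ, ContDiff ℝ 1 f →
      Trace (fcSA f (H₀ + V) - fcSA f H₀)
        = ∫ l : ℝ, deriv f l *
            (((countBelow H₀ l : ℝ) - (countBelow (H₀ + V) l : ℝ) : ℝ) : ℂ) := by
  have hA : IsSelfAdjoint (H₀ + V) := hH₀.add hV
  set n := Module.finrank ℂ H with hn
  set β := hH₀.isSymmetric.eigenvalues hn.symm with hβ
  set α := hA.isSymmetric.eigenvalues hn.symm with hα
  -- pointwise description of the spectral shift function
  have hkey : ∀ l : ℝ, (countBelow H₀ l : ℝ) - (countBelow (H₀ + V) l : ℝ)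
      = ∑ i : Fin n, ((Ioc (β i) (α i)).indicator (fun _ => (1:ℝ)) l
          - (Ioc (α i) (β i)).indicator (fun _ => (1:ℝ)) l) := by
    intro l
    rw [countBelow_eq hH₀ hn.symm l, countBelow_eq hA hn.symm l,
      Finset.card_filter, Finset.card_filter]
    push_cast
    rw [← Finset.sum_sub_distrib]
    apply Finset.sum_congr rfl
    intro i _
    change ((if β i < l then (1:ℝ) else 0) - if α i < l then 1 else 0) = _
    by_cases h1 : β i < l <;> by_cases h2 : α i < l
    · simp [Set.indicator_apply, Set.mem_Ioc, h1, h2, not_le.mpr h1, not_le.mpr h2]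
    · simp [Set.indicator_apply, Set.mem_Ioc, h1, h2, le_of_not_gt h2, not_le.mpr h1]
    · simp [Set.indicator_apply, Set.mem_Ioc, h1, h2, le_of_not_gt h1, not_le.mpr h2]
    · simp [Set.indicator_apply, Set.mem_Ioc, h1, h2]
  -- integrability
  have hint : ∀ a c : ℝ, Integrable ((Ioc a c).indicator (fun _ => (1:ℝ))) := by
    intro a c
    rw [integrable_indicator_iff measurableSet_Ioc]
    exact (integrableOn_const_iff (C := (1:ℝ))).mpr (Or.inr measure_Ioc_lt_top)
  have hintsum : Integrable (fun l : ℝ =>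
      ∑ i : Fin n, ((Ioc (β i) (α i)).indicator (fun _ => (1:ℝ)) l
        - (Ioc (α i) (β i)).indicator (fun _ => (1:ℝ)) l)) := by
    apply integrable_finset_sum
    intro i _
    exact (hint _ _).sub (hint _ _)
  constructor
  · have := hintsum.congr (by
      filter_upwards with l using (hkey l).symm : ∀ᵐ l : ℝ,
        (∑ i : Fin n, ((Ioc (β i) (α i)).indicator (fun _ => (1:ℝ)) l
          - (Ioc (α i) (β i)).indicator (fun _ => (1:ℝ)) l))
          = (countBelow H₀ l : ℝ) - (countBelow (H₀ + V) l : ℝ))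
    exact this
  · intro f hf
    have hcf : Continuous f := hf.continuous
    have hcd : Continuous (deriv f) := hf.continuous_deriv le_rfl
    have hdiff : Differentiable ℝ f := hf.differentiable one_ne_zero
    -- integrability of indicator of deriv f
    have hintd : ∀ a c : ℝ, Integrable ((Ioc a c).indicator (deriv f)) := by
      intro a c
      rw [integrable_indicator_iff measurableSet_Ioc]
      exact hcd.integrableOn_Ioc
    -- rewrite the integrand
    have hrw : (fun l : ℝ => deriv f l *
        (((countBelow H₀ l : ℝ) - (countBelow (H₀ + V) l : ℝ) : ℝ) : ℂ))
        = fun l : ℝ => ∑ i : Fin n, ((Ioc (β i) (α i)).indicator (deriv f) l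
            - (Ioc (α i) (β i)).indicator (deriv f) l) := by
      funext l
      rw [hkey l]
      push_cast
      rw [Finset.mul_sum]
      apply Finset.sum_congr rfl
      intro i _
      rw [mul_sub, indicator_helper, indicator_helper]
    rw [hrw]
    rw [MeasureTheory.integral_finset_sum (μ := volume) Finset.univ
      (f := fun (i : Fin n) (l : ℝ) => (Ioc (β i) (α i)).indicator (deriv f) l
        - (Ioc (α i) (β i)).indicator (deriv f) l)
      (fun i _ => ((hintd _ _).sub (hintd _ _)))]
    have hterm : ∀ i : Fin n,
        (∫ l : ℝ, ((Ioc (β i) (α i)).indicator (deriv f) l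
          - (Ioc (α i) (β i)).indicator (deriv f) l)) = f (α i) - f (β i) := by
      intro i
      rw [integral_sub (hintd _ _) (hintd _ _),
        integral_indicator measurableSet_Ioc, integral_indicator measurableSet_Ioc]
      have : (∫ l in Ioc (β i) (α i), deriv f l) - ∫ l in Ioc (α i) (β i), deriv f l
          = ∫ l in (β i)..(α i), deriv f l := rfl
      rw [this]
      exact intervalIntegral.integral_deriv_eq_sub (fun x _ => hdiff x)
        (hcd.intervalIntegrable _ _)
    rw [Finset.sum_congr rfl (fun i _ => hterm i), Finset.sum_sub_distrib]
    have h1 : Trace (fcSA f (H₀ + V)) = ∑ i, f (α i) := trace_fcSA hA hn.symm hcf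
    have h2 : Trace (fcSA f H₀) = ∑ i, f (β i) := trace_fcSA hH₀ hn.symm hcf
    have hsub : Trace (fcSA f (H₀ + V) - fcSA f H₀)
        = Trace (fcSA f (H₀ + V)) - Trace (fcSA f H₀) := by
      simp [Trace, map_sub]
    rw [hsub, h1, h2]

end
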